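/- arXiv:1110.1779 — 3 statements merged into one kernel-verified Lean document; each statement's English description precedes it below -/
import Mathlib

section
/- At the interior Nash equilibrium of the communal-demand pricing game, the ISP's revenue equals U1* = D_max^2/(9d), which is independent of the side payment p_s; in particular, the derivative of U1* with respect to p_s is zero, so the ISP does not profit from the introduction of side payments. -/
/-- At the interior Nash equilibrium, the ISP's revenue equals D_max^2/(9d),
independent of the side payment p_s; in particular its derivative in p_s is zero. -/
theorem stmt_1 (Dmax d : ℝ) (hD : 0 < Dmax) (hd : 0 < d)
    (U1star : ℝ → ℝ)
    (hU1star : ∀ p_s : ℝ,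
      U1star p_s = ((Dmax / (3 * d) - p_s) + p_s) *
        (Dmax - d * ((Dmax / (3 * d) - p_s) + (Dmax / (3 * d) + p_s)))) :
    (∀ p_s : ℝ, U1star p_s = Dmax ^ 2 / (9 * d)) ∧
    (∀ p_s : ℝ, deriv U1star p_s = 0) := by
  have hd' : d ≠ 0 := ne_of_gt hd
  have hconst : ∀ p_s : ℝ, U1star p_s = Dmax ^ 2 / (9 * d) := by
    intro p_s
    rw [hU1star]
    field_simp
    ring
  refine ⟨hconst, fun p_s => ?_⟩
  have : U1star = fun _ => Dmax ^ 2 / (9 * d) := funext hconst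
  rw [this, deriv_const]
end

section
/- In the game with type-dependent demands and bandwidth-based side payments, if (p1*, p2*) satisfies the first-order conditions ∂U1/∂p1 = 0 and ∂U2/∂p2 = 0, then the total equilibrium price is p* = p1* + p2* = (1/3)(δ1 - p_s + δ2 + (d1/d2)p_s), where δk = D_max,k/d_k, and p1* + p_s = δ1 - p*. -/
/-- In the game with type-dependent demands and bandwidth-based side payments,
the first-order conditions imply the closed form for the total equilibrium price
p* = (1/3)(δ1 - p_s + δ2 + (d1/d2) p_s), and p1* + p_s = δ1 - p*. -/
theorem stmt_3 (Dmax1 Dmax2 d1 d2 p_s : ℝ)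
    (hD1 : 0 < Dmax1) (hD2 : 0 < Dmax2) (hd1 : 0 < d1) (hd2 : 0 < d2)
    (p1 p2 : ℝ)
    (hFOC1 : deriv (fun x : ℝ => (x + p_s) * (Dmax1 - d1 * (x + p2))) p1 = 0)
    (hFOC2 : deriv (fun y : ℝ =>
      y * (Dmax2 - d2 * (p1 + y)) - p_s * (Dmax1 - d1 * (p1 + y))) p2 = 0) :
    p1 + p2 = (1 / 3) * (Dmax1 / d1 - p_s + Dmax2 / d2 + (d1 / d2) * p_s) ∧
    p1 + p_s = Dmax1 / d1 - (p1 + p2) := by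
  have h1 : HasDerivAt (fun x : ℝ => (x + p_s) * (Dmax1 - d1 * (x + p2)))
      (1 * (Dmax1 - d1 * (p1 + p2)) + (p1 + p_s) * (0 - d1 * 1)) p1 := by
    exact ((hasDerivAt_id p1).add_const p_s).mul
      ((hasDerivAt_const p1 Dmax1).sub
        (((hasDerivAt_id p1).add_const p2).const_mul d1))
  have h2 : HasDerivAt (fun y : ℝ =>
      y * (Dmax2 - d2 * (p1 + y)) - p_s * (Dmax1 - d1 * (p1 + y)))
      ((1 * (Dmax2 - d2 * (p1 + p2)) + p2 * (0 - d2 * 1)) -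
        p_s * (0 - d1 * 1)) p2 := by
    exact ((hasDerivAt_id p2).mul
      ((hasDerivAt_const p2 Dmax2).sub
        (((hasDerivAt_id p2).const_add p1).const_mul d2))).sub
      (((hasDerivAt_const p2 Dmax1).sub
        (((hasDerivAt_id p2).const_add p1).const_mul d1)).const_mul p_s)
  rw [h1.deriv] at hFOC1
  rw [h2.deriv] at hFOC2
  have hd1' := hd1.ne'
  have hd2' := hd2.ne'
  constructor
  · field_simp
    linear_combination (-d2) * hFOC1 + (-d1) * hFOC2
  · field_simp
    linear_combination -hFOC1
end

section
/- At the interior Nash equilibrium of the game with type-dependent demands and bandwidth-based side payments, the ISP's revenue is U1* = (d1/9)(2δ1 - δ2 + (1 - d1/d2)p_s)^2, where δk = D_max,k/d_k, and hence ∂U1*/∂p_s = (2d1/9)(1 - d1/d2)(2δ1 - δ2 + (1 - d1/d2)p_s). -/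
/-- At the interior Nash equilibrium with bandwidth-based side payments, the
ISP's revenue is U1* = (d1/9)(2δ1 - δ2 + (1 - d1/d2) p_s)^2, and hence
∂U1*/∂p_s = (2 d1/9)(1 - d1/d2)(2δ1 - δ2 + (1 - d1/d2) p_s). -/
theorem stmt_4 (Dmax1 Dmax2 d1 d2 : ℝ)
    (hD1 : 0 < Dmax1) (hD2 : 0 < Dmax2) (hd1 : 0 < d1) (hd2 : 0 < d2) :
    (∀ p_s p1 p2 : ℝ,
      p1 + p2 = (1 / 3) * (Dmax1 / d1 - p_s + Dmax2 / d2 + (d1 / d2) * p_s) →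
      p1 + p_s = Dmax1 / d1 - (p1 + p2) →
      (p1 + p_s) * (Dmax1 - d1 * (p1 + p2)) =
        (d1 / 9) * (2 * (Dmax1 / d1) - Dmax2 / d2 + (1 - d1 / d2) * p_s) ^ 2) ∧
    (∀ p_s : ℝ,
      deriv (fun s : ℝ =>
        (d1 / 9) * (2 * (Dmax1 / d1) - Dmax2 / d2 + (1 - d1 / d2) * s) ^ 2) p_s =
      (2 * d1 / 9) * (1 - d1 / d2) *
        (2 * (Dmax1 / d1) - Dmax2 / d2 + (1 - d1 / d2) * p_s)) := by
  constructor
  · intro p_s p1 p2 h1 h2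
    have hd1' : d1 ≠ 0 := hd1.ne'
    have hd2' : d2 ≠ 0 := hd2.ne'
    rw [h2, h1]
    field_simp
    ring
  · intro p_s
    have : (fun s : ℝ =>
        (d1 / 9) * (2 * (Dmax1 / d1) - Dmax2 / d2 + (1 - d1 / d2) * s) ^ 2)
        = fun s : ℝ => (d1 / 9) * ((2 * (Dmax1 / d1) - Dmax2 / d2 + (1 - d1 / d2) * s) ^ 2) := rfl
    rw [this]
    rw [deriv_const_mul]
    · rw [deriv_fun_pow]
      · rw [deriv_const_add, deriv_const_mul _ (differentiableAt_fun_id)]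
        simp
        ring
      · exact (differentiableAt_const _).add ((differentiableAt_const _).mul differentiableAt_fun_id)
    · exact (((differentiableAt_const _).add ((differentiableAt_const _).mul differentiableAt_fun_id)).pow 2)
end
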